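/- Let p be an odd prime. Then in ZMod p one has 2 · q_p(2) ≡ − Σ_{0 < m < p/2} 1/m, where q_p(2) = (2^{p−1} − 1)/p ∈ ℤ and the sum of reciprocals of the integers m with 0 < m < p/2 is a rational number with denominator coprime to p viewed in ZMod p. -/

import Mathlib

open Finset

private theorem choose_neg_one_pow (p : ℕ) (hp : p.Prime) (j : ℕ) (hj : j < p) :
    (((p-1).choose j : ℕ) : ZMod p) = (-1)^j := by
  induction j with
  | zero => simp
  | succ j ih =>
    have hj' : j < p := Nat.lt_of_succ_lt hj
    have hp1 : p - 1 + 1 = p := Nat.succ_pred_eq_of_pos hp.pos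
    have hpas : (p-1).choose j + (p-1).choose (j+1) = p.choose (j+1) := by
      have := Nat.choose_succ_succ (p-1) j
      rw [Nat.succ_eq_add_one, hp1] at this
      exact this.symm
    have hdvd : p ∣ p.choose (j+1) := hp.dvd_choose_self (Nat.succ_ne_zero j) hj
    have h0 : ((p.choose (j+1) : ℕ) : ZMod p) = 0 :=
      (ZMod.natCast_eq_zero_iff _ _).mpr hdvd
    have h2 : (((p-1).choose j : ℕ) : ZMod p) + (((p-1).choose (j+1) : ℕ)) = 0 := by
      rw [← Nat.cast_add, hpas, h0]
    rw [ih hj'] at h2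
    rw [pow_succ]
    linear_combination h2

theorem eisenstein (p : ℕ) (hp : p.Prime) (hodd : Odd p) :
    2 * (((2 ^ (p - 1) - 1) / p : ℕ) : ZMod p)
    = - ∑ m ∈ (Finset.Ioo 0 p).filter (fun m : ℕ => 2 * m < p), ((m : ZMod p))⁻¹ := by
  haveI : Fact p.Prime := ⟨hp⟩
  have hp2 : p ≠ 2 := by rintro rfl; exact absurd hodd (by decide)
  have h2ne : (2 : ZMod p) ≠ 0 := by
    have hnd : ¬ (p ∣ 2) := fun h => hp2 ((Nat.prime_dvd_prime_iff_eq hp Nat.prime_two).mp h)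
    intro h
    exact hnd ((ZMod.natCast_eq_zero_iff 2 p).mp (by exact_mod_cast h))
  have hp1 : p - 1 + 1 = p := Nat.succ_pred_eq_of_pos hp.pos
  have hone : 1 ≤ 2 ^ (p-1) := Nat.one_le_two_pow
  have hferm : p ∣ 2 ^ (p-1) - 1 := by
    rw [← ZMod.natCast_eq_zero_iff]
    push_cast [Nat.cast_sub hone]
    rw [ZMod.pow_card_sub_one_eq_one h2ne]
    ring
  set q : ℕ := (2 ^ (p-1) - 1) / p with hq
  have hsumchoose : ∑ k ∈ Ioo 0 p, p.choose k = 2 ^ p - 2 := by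
    have hr : range (p+1) = insert 0 (insert p (Ioo 0 p)) := by
      ext k; simp [Nat.lt_succ_iff]; omega
    have hs := Nat.sum_range_choose p
    rw [hr, Finset.sum_insert (by simp [mem_insert, mem_Ioo]; omega),
      Finset.sum_insert (by simp [mem_Ioo])] at hs
    simp only [Nat.choose_zero_right, Nat.choose_self] at hs
    omega
  have hnat : 2 * q = ∑ k ∈ Ioo 0 p, p.choose k / p := by
    apply Nat.eq_of_mul_eq_mul_left hp.pos
    rw [Finset.mul_sum]
    have h1 : p * (2 * q) = 2 ^ p - 2 := by
      rw [show p * (2*q) = 2 * (p * q) by ring, hq, Nat.mul_div_cancel' hferm]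
      have h2p : 2 * 2 ^ (p-1) = 2 ^ p := by rw [← pow_succ', hp1]
      omega
    have h2 : ∑ k ∈ Ioo 0 p, p * (p.choose k / p) = 2 ^ p - 2 := by
      rw [← hsumchoose]
      apply Finset.sum_congr rfl
      intro k hk
      simp only [mem_Ioo] at hk
      exact Nat.mul_div_cancel' (hp.dvd_choose_self (by omega) hk.2)
    rw [h1, h2]
  have hterm : ∀ k ∈ Ioo 0 p,
      ((p.choose k / p : ℕ) : ZMod p) = (-1)^(k-1) * (k : ZMod p)⁻¹ := by
    intro k hk
    simp only [mem_Ioo] at hk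
    have hk0 : k ≠ 0 := by omega
    have hdvd : p ∣ p.choose k := hp.dvd_choose_self hk0 hk.2
    have hkey : k * (p.choose k / p) = (p-1).choose (k-1) := by
      have h := Nat.add_one_mul_choose_eq (p-1) (k-1)
      rw [hp1,
        Nat.sub_add_cancel (by omega : 1 ≤ k)] at h
      rw [← Nat.mul_div_assoc k hdvd, mul_comm k, ← h, mul_comm p,
        Nat.mul_div_cancel _ hp.pos]
    have hkne : (k : ZMod p) ≠ 0 := by
      intro h
      have := (ZMod.natCast_eq_zero_iff k p).mp h
      exact absurd (Nat.le_of_dvd (by omega) this) (by omega)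
    have hcast : (k : ZMod p) * ((p.choose k / p : ℕ) : ZMod p) = (-1)^(k-1) := by
      rw [← Nat.cast_mul, hkey, choose_neg_one_pow p hp (k-1) (by omega)]
    rw [← inv_mul_cancel_left₀ hkne (((p.choose k / p : ℕ)) : ZMod p), hcast]
    ring
  have hinvzero : ∑ k ∈ Ioo 0 p, (k : ZMod p)⁻¹ = 0 := by
    apply Finset.sum_involution (fun k _ => p - k)
    · intro a ha
      simp only [mem_Ioo] at ha
      have hc : ((p - a : ℕ) : ZMod p) = -(a : ZMod p) := by
        rw [Nat.cast_sub ha.2.le, ZMod.natCast_self]; ring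
      rw [hc, inv_neg]; ring
    · intro a ha _
      simp only [mem_Ioo] at ha
      have := Nat.odd_iff.mp hodd
      omega
    · intro a ha; simp only [mem_Ioo] at ha ⊢; omega
    · intro a ha; simp only [mem_Ioo] at ha; omega
  have hbij : ∑ k ∈ (Ioo 0 p).filter (fun k => Even k), (k : ZMod p)⁻¹
      = ∑ m ∈ (Ioo 0 p).filter (fun m : ℕ => 2 * m < p), ((2 * m : ℕ) : ZMod p)⁻¹ := by
    refine Finset.sum_nbij' (fun k => k / 2) (fun m => 2 * m) ?_ ?_ ?_ ?_ ?_
    · intro a ha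
      simp only [mem_filter, mem_Ioo, Nat.even_iff] at ha ⊢
      omega
    · intro b hb
      simp only [mem_filter, mem_Ioo, Nat.even_iff] at hb ⊢
      omega
    · intro a ha
      simp only [mem_filter, mem_Ioo, Nat.even_iff] at ha
      show 2 * (a / 2) = a
      omega
    · intro b hb
      show 2 * b / 2 = b
      omega
    · intro a ha
      simp only [mem_filter, mem_Ioo, Nat.even_iff] at ha
      show ((a : ZMod p))⁻¹ = ((2 * (a / 2) : ℕ) : ZMod p)⁻¹
      rw [show 2 * (a / 2) = a by omega]
  calc 2 * ((q : ℕ) : ZMod p)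
      = ((2 * q : ℕ) : ZMod p) := by push_cast; ring
    _ = ∑ k ∈ Ioo 0 p, ((p.choose k / p : ℕ) : ZMod p) := by rw [hnat]; push_cast; rfl
    _ = ∑ k ∈ Ioo 0 p, (-1)^(k-1) * (k : ZMod p)⁻¹ := Finset.sum_congr rfl hterm
    _ = - ∑ m ∈ (Ioo 0 p).filter (fun m : ℕ => 2 * m < p), ((m : ZMod p))⁻¹ := by
        rw [← Finset.sum_filter_add_sum_filter_not (Ioo 0 p) (fun k => Even k)]
        have he : ∑ k ∈ (Ioo 0 p).filter (fun k => Even k), (-1:ZMod p)^(k-1) * (k : ZMod p)⁻¹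
            = - ∑ k ∈ (Ioo 0 p).filter (fun k => Even k), (k : ZMod p)⁻¹ := by
          rw [← Finset.sum_neg_distrib]
          apply Finset.sum_congr rfl
          intro k hk
          simp only [mem_filter, mem_Ioo] at hk
          have hkk : Odd (k - 1) := Nat.Even.sub_odd (by omega) hk.2 odd_one
          rw [hkk.neg_one_pow]; ring
        have ho : ∑ k ∈ (Ioo 0 p).filter (fun k => ¬ Even k), (-1:ZMod p)^(k-1) * (k : ZMod p)⁻¹
            = ∑ k ∈ (Ioo 0 p).filter (fun k => ¬ Even k), (k : ZMod p)⁻¹ := by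
          apply Finset.sum_congr rfl
          intro k hk
          simp only [mem_filter, mem_Ioo, Nat.not_even_iff_odd] at hk
          have hkk : Even (k - 1) := Nat.Odd.sub_odd hk.2 odd_one
          rw [hkk.neg_one_pow]; ring
        rw [he, ho]
        have hsplit := Finset.sum_filter_add_sum_filter_not (Ioo 0 p) (fun k => Even k)
          (fun k => (k : ZMod p)⁻¹)
        rw [hinvzero] at hsplit
        have hfix : ∀ m ∈ (Ioo 0 p).filter (fun m : ℕ => 2 * m < p),
            ((2 * m : ℕ) : ZMod p)⁻¹ = 2⁻¹ * ((m : ZMod p))⁻¹ := by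
          intro m hm
          push_cast
          rw [mul_inv, mul_comm]
        rw [Finset.sum_congr rfl hfix] at hbij
        rw [← Finset.mul_sum] at hbij
        have h22 : (2 : ZMod p) * 2⁻¹ = 1 := mul_inv_cancel₀ h2ne
        linear_combination hsplit - 2 * hbij -
          (∑ m ∈ (Ioo 0 p).filter (fun m : ℕ => 2 * m < p), ((m : ZMod p))⁻¹) * h22
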